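/- There is an absolute constant C > 0 such that for all real M ≥ 1, all real T with 0 < T ≤ √M, all real Ξ with 0 ≤ Ξ ≤ M, all positive integers m, n, k with m < n and m ≤ M/(2T), and either choice of sign ±, one has |∫_M^{M+Ξ} x^{1/2}·e(±(2√(mx)/k − 2√(n(x+T))/k)) dx| ≤ C·k·√n·M/(n − m). -/

import Mathlib

open Complex MeasureTheory
open Set intervalIntegral
set_option maxHeartbeats 1000000

lemma vdc_core (a b : ℝ) (hab : a ≤ b) (g g' ψ ψ' ψ'' : ℝ → ℝ) (G δ : ℝ)
    (hδ : 0 < δ)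
    (hg : ∀ x ∈ Icc a b, HasDerivAt g (g' x) x)
    (hψ : ∀ x ∈ Icc a b, HasDerivAt ψ (ψ' x) x)
    (hψd : ∀ x ∈ Icc a b, HasDerivAt ψ' (ψ'' x) x)
    (hg'c : ContinuousOn g' (Icc a b))
    (hψ''c : ContinuousOn ψ'' (Icc a b))
    (hg0 : ∀ x ∈ Icc a b, 0 ≤ g x)
    (hgG : ∀ x ∈ Icc a b, g x ≤ G)
    (hg'0 : ∀ x ∈ Icc a b, 0 ≤ g' x)
    (hsign : (∀ x ∈ Icc a b, ψ' x ≤ -δ) ∨ (∀ x ∈ Icc a b, δ ≤ ψ' x))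
    (hψ''sign : (∀ x ∈ Icc a b, 0 ≤ ψ'' x) ∨ (∀ x ∈ Icc a b, ψ'' x ≤ 0)) :
    ‖∫ x in a..b, (g x : ℂ) * Complex.exp (ψ x * Complex.I)‖ ≤ 4 * G / δ := by
  have huicc : uIcc a b = Icc a b := uIcc_of_le hab
  have habs : ∀ x ∈ Icc a b, δ ≤ |ψ' x| := by
    intro x hx
    rcases hsign with h | h
    · have := h x hx; rw [_root_.abs_of_nonpos (by linarith)]; linarith
    · have := h x hx; rw [_root_.abs_of_nonneg (by linarith)]; linarith
  have hne : ∀ x ∈ Icc a b, ψ' x ≠ 0 := by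
    intro x hx h0
    have := habs x hx; rw [h0] at this; simp at this; linarith
  have hGnn : 0 ≤ G := le_trans (hg0 a ⟨le_refl a, hab⟩) (hgG a ⟨le_refl a, hab⟩)
  -- continuity of the basic functions
  have hgc : ContinuousOn g (Icc a b) := fun x hx => (hg x hx).continuousAt.continuousWithinAt
  have hψc : ContinuousOn ψ (Icc a b) := fun x hx => (hψ x hx).continuousAt.continuousWithinAt
  have hψ'c : ContinuousOn ψ' (Icc a b) := fun x hx => (hψd x hx).continuousAt.continuousWithinAt
  -- the auxiliary functions
  set h : ℝ → ℂ := fun x => (g x : ℂ) / ((ψ' x : ℂ) * Complex.I) with hh_def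
  set h' : ℝ → ℂ := fun x => ((g' x : ℂ) * ((ψ' x : ℂ) * Complex.I)
      - (g x : ℂ) * ((ψ'' x : ℂ) * Complex.I)) / ((ψ' x : ℂ) * Complex.I) ^ 2 with hh'_def
  set u : ℝ → ℂ := fun x => Complex.exp ((ψ x : ℂ) * Complex.I) with hu_def
  have hdenne : ∀ x ∈ Icc a b, (ψ' x : ℂ) * Complex.I ≠ 0 := by
    intro x hx
    exact mul_ne_zero (by exact_mod_cast hne x hx) Complex.I_ne_zero
  have hhd : ∀ x ∈ Icc a b, HasDerivAt h (h' x) x := by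
    intro x hx
    exact ((hg x hx).ofReal_comp).div (((hψd x hx).ofReal_comp).mul_const Complex.I)
      (hdenne x hx)
  have hud : ∀ x ∈ Icc a b, HasDerivAt u (((ψ' x : ℂ) * Complex.I) * u x) x := by
    intro x hx
    have := (((hψ x hx).ofReal_comp).mul_const Complex.I).cexp
    simpa [hu_def, mul_comm] using this
  -- w = h * u
  set w : ℝ → ℂ := fun x => h x * u x with hw_def
  have hwd : ∀ x ∈ Icc a b, HasDerivAt w (h' x * u x + (g x : ℂ) * u x) x := by
    intro x hx
    have := (hhd x hx).mul (hud x hx)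
    have hkey : h x * (((ψ' x : ℂ) * Complex.I) * u x) = (g x : ℂ) * u x := by
      have hc := hdenne x hx
      calc h x * (((ψ' x : ℂ) * Complex.I) * u x)
          = (g x : ℂ) * ((((ψ' x : ℂ) * Complex.I)) / (((ψ' x : ℂ) * Complex.I))) * u x := by
            rw [hh_def]; ring
        _ = (g x : ℂ) * u x := by rw [div_self hc]; ring
    rw [← hkey]
    exact this
  -- continuity of h', u
  have huc : ContinuousOn u (Icc a b) := by
    apply Continuous.comp_continuousOn Complex.continuous_exp
    exact (Complex.continuous_ofReal.comp_continuousOn hψc).mul continuousOn_const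
  have hh'c : ContinuousOn h' (Icc a b) := by
    apply ContinuousOn.div
    · exact ((Complex.continuous_ofReal.comp_continuousOn hg'c).mul
        ((Complex.continuous_ofReal.comp_continuousOn hψ'c).mul continuousOn_const)).sub
        ((Complex.continuous_ofReal.comp_continuousOn hgc).mul
        ((Complex.continuous_ofReal.comp_continuousOn hψ''c).mul continuousOn_const))
    · exact ((Complex.continuous_ofReal.comp_continuousOn hψ'c).mul continuousOn_const).pow 2
    · intro x hx; exact pow_ne_zero 2 (hdenne x hx)
  have hgcuC : ContinuousOn (fun x => (g x : ℂ) * u x) (Icc a b) :=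
    (Complex.continuous_ofReal.comp_continuousOn hgc).mul huc
  have hh'uc : ContinuousOn (fun x => h' x * u x) (Icc a b) := hh'c.mul huc
  have hint1 : IntervalIntegrable (fun x => h' x * u x) volume a b :=
    (hh'uc.mono huicc.le).intervalIntegrable
  have hint2 : IntervalIntegrable (fun x => (g x : ℂ) * u x) volume a b :=
    (hgcuC.mono huicc.le).intervalIntegrable
  -- FTC
  have hftc : ∫ x in a..b, (h' x * u x + (g x : ℂ) * u x) = w b - w a := by
    apply integral_eq_sub_of_hasDerivAt
    · intro x hx; exact hwd x (huicc ▸ hx)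
    · exact hint1.add hint2
  have hsplit : ∫ x in a..b, (h' x * u x + (g x : ℂ) * u x)
      = (∫ x in a..b, h' x * u x) + ∫ x in a..b, (g x : ℂ) * u x :=
    integral_add hint1 hint2
  have hmain : ∫ x in a..b, (g x : ℂ) * u x = (w b - w a) - ∫ x in a..b, h' x * u x := by
    rw [← hftc, hsplit]; ring
  -- norm bounds on w
  have hwnorm : ∀ x ∈ Icc a b, ‖w x‖ ≤ G / δ := by
    intro x hx
    have hux : ‖u x‖ = 1 := by
      rw [hu_def]
      simp [Complex.norm_exp_ofReal_mul_I]
    rw [hw_def]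
    simp only [norm_mul, hux, mul_one]
    rw [hh_def]
    simp only [norm_div, norm_mul, Complex.norm_real, Complex.norm_I, mul_one]
    rw [Real.norm_eq_abs, Real.norm_eq_abs, _root_.abs_of_nonneg (hg0 x hx)]
    exact div_le_div₀ hGnn (hgG x hx) hδ (habs x hx)
  -- pointwise bound on h' * u
  set bnd : ℝ → ℝ := fun x => g' x / δ + G * |ψ'' x| / (ψ' x) ^ 2 with hbnd_def
  have hptw : ∀ x ∈ Icc a b, ‖h' x * u x‖ ≤ bnd x := by
    intro x hx
    have hux : ‖u x‖ = 1 := by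
      rw [hu_def]; simp [Complex.norm_exp_ofReal_mul_I]
    rw [norm_mul, hux, mul_one, hh'_def]
    have hden : ‖((ψ' x : ℂ) * Complex.I) ^ 2‖ = (ψ' x) ^ 2 := by
      rw [norm_pow, norm_mul, Complex.norm_real, Complex.norm_I, mul_one,
        Real.norm_eq_abs, _root_.sq_abs]
    have hnum : ‖(g' x : ℂ) * ((ψ' x : ℂ) * Complex.I)
        - (g x : ℂ) * ((ψ'' x : ℂ) * Complex.I)‖ ≤ g' x * |ψ' x| + g x * |ψ'' x| := by
      refine le_trans (norm_sub_le _ _) ?_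
      rw [norm_mul, norm_mul, norm_mul, norm_mul, Complex.norm_real, Complex.norm_real,
        Complex.norm_real, Complex.norm_real, Complex.norm_I, mul_one, mul_one,
        Real.norm_eq_abs, Real.norm_eq_abs, Real.norm_eq_abs, Real.norm_eq_abs,
        _root_.abs_of_nonneg (hg'0 x hx), _root_.abs_of_nonneg (hg0 x hx)]
    rw [norm_div, hden]
    have hsq : (0:ℝ) < (ψ' x) ^ 2 := pow_two_pos_of_ne_zero (hne x hx)
    have step1 : ‖(g' x : ℂ) * ((ψ' x : ℂ) * Complex.I)
        - (g x : ℂ) * ((ψ'' x : ℂ) * Complex.I)‖ / (ψ' x) ^ 2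
        ≤ (g' x * |ψ' x| + g x * |ψ'' x|) / (ψ' x) ^ 2 := by gcongr
    refine le_trans step1 ?_
    rw [hbnd_def]
    have h1 : g' x * |ψ' x| / (ψ' x) ^ 2 ≤ g' x / δ := by
      have habsx := habs x hx
      have key : g' x * |ψ' x| * δ ≤ g' x * |ψ' x| * |ψ' x| :=
        mul_le_mul_of_nonneg_left habsx (mul_nonneg (hg'0 x hx) (abs_nonneg _))
      rw [div_le_div_iff₀ hsq hδ, ← _root_.sq_abs (ψ' x)]
      nlinarith [key]
    have h2 : g x * |ψ'' x| / (ψ' x) ^ 2 ≤ G * |ψ'' x| / (ψ' x) ^ 2 := by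
      gcongr
      exact hgG x hx
    calc (g' x * |ψ' x| + g x * |ψ'' x|) / ψ' x ^ 2
        = g' x * |ψ' x| / ψ' x ^ 2 + g x * |ψ'' x| / ψ' x ^ 2 := by ring
      _ ≤ g' x / δ + G * |ψ'' x| / ψ' x ^ 2 := add_le_add h1 h2
  -- integral of g'
  have hIg' : ∫ x in a..b, g' x = g b - g a := by
    apply integral_eq_sub_of_hasDerivAt
    · intro x hx; exact hg x (huicc ▸ hx)
    · exact ((hg'c.mono huicc.le)).intervalIntegrable
  -- integral of ψ'' / ψ'^2
  have hvd : ∀ x ∈ Icc a b, HasDerivAt (fun y => -(ψ' y)⁻¹) (ψ'' x / (ψ' x) ^ 2) x := by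
    intro x hx
    have := ((hψd x hx).inv (hne x hx)).neg
    refine this.congr_deriv ?_
    ring
  have hratioc : ContinuousOn (fun x => ψ'' x / (ψ' x) ^ 2) (Icc a b) :=
    hψ''c.div (hψ'c.pow 2) (fun x hx => pow_ne_zero 2 (hne x hx))
  have hIv : ∫ x in a..b, ψ'' x / (ψ' x) ^ 2 = (ψ' a)⁻¹ - (ψ' b)⁻¹ := by
    have := integral_eq_sub_of_hasDerivAt (f := fun y => -(ψ' y)⁻¹)
      (f' := fun x => ψ'' x / (ψ' x) ^ 2)
      (fun x hx => hvd x (huicc ▸ hx)) ((hratioc.mono huicc.le).intervalIntegrable)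
    rw [this]; ring
  -- endpoint inverse bounds
  have hinv_bnd : ∀ x ∈ Icc a b, |(ψ' x)⁻¹| ≤ δ⁻¹ := by
    intro x hx
    rw [abs_inv]
    exact inv_anti₀ hδ (habs x hx)
  have hdiff_bnd : |(ψ' a)⁻¹ - (ψ' b)⁻¹| ≤ δ⁻¹ := by
    have ha' := hinv_bnd a ⟨le_refl a, hab⟩
    have hb' := hinv_bnd b ⟨hab, le_refl b⟩
    rcases hsign with hs | hs
    · have h1 : ψ' a < 0 := lt_of_le_of_lt (hs a ⟨le_refl a, hab⟩) (by linarith)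
      have h2 : ψ' b < 0 := lt_of_le_of_lt (hs b ⟨hab, le_refl b⟩) (by linarith)
      have i1 : (ψ' a)⁻¹ ≤ 0 := inv_nonpos.2 h1.le
      have i2 : (ψ' b)⁻¹ ≤ 0 := inv_nonpos.2 h2.le
      rw [abs_le]
      rw [abs_le] at ha' hb'
      constructor <;> linarith [ha'.1, ha'.2, hb'.1, hb'.2]
    · have h1 : 0 < ψ' a := lt_of_lt_of_le hδ (hs a ⟨le_refl a, hab⟩)
      have h2 : 0 < ψ' b := lt_of_lt_of_le hδ (hs b ⟨hab, le_refl b⟩)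
      have i1 : 0 ≤ (ψ' a)⁻¹ := (inv_nonneg).2 h1.le
      have i2 : 0 ≤ (ψ' b)⁻¹ := (inv_nonneg).2 h2.le
      rw [abs_le]
      rw [abs_le] at ha' hb'
      constructor <;> linarith [ha'.1, ha'.2, hb'.1, hb'.2]
  -- integral of |ψ''| / ψ'^2
  have hIabs : ∫ x in a..b, |ψ'' x| / (ψ' x) ^ 2 ≤ δ⁻¹ := by
    rcases hψ''sign with hp | hp
    · have : ∫ x in a..b, |ψ'' x| / (ψ' x) ^ 2 = ∫ x in a..b, ψ'' x / (ψ' x) ^ 2 := by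
        apply integral_congr
        intro x hx
        rw [huicc] at hx
        show |ψ'' x| / (ψ' x) ^ 2 = ψ'' x / (ψ' x) ^ 2
        rw [_root_.abs_of_nonneg (hp x hx)]
      rw [this, hIv]
      exact le_trans (le_abs_self _) hdiff_bnd
    · have : ∫ x in a..b, |ψ'' x| / (ψ' x) ^ 2 = ∫ x in a..b, -(ψ'' x / (ψ' x) ^ 2) := by
        apply integral_congr
        intro x hx
        rw [huicc] at hx
        show |ψ'' x| / (ψ' x) ^ 2 = -(ψ'' x / (ψ' x) ^ 2)
        rw [_root_.abs_of_nonpos (hp x hx)]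
        ring
      rw [this, intervalIntegral.integral_neg, hIv]
      exact le_trans (neg_le_abs _) hdiff_bnd
  -- integral of bnd
  have hbnd_int1 : IntervalIntegrable (fun x => g' x / δ) volume a b :=
    ((hg'c.div_const δ).mono huicc.le).intervalIntegrable
  have hbnd_int2 : IntervalIntegrable (fun x => G * |ψ'' x| / (ψ' x) ^ 2) volume a b := by
    have : ContinuousOn (fun x => G * |ψ'' x| / (ψ' x) ^ 2) (Icc a b) :=
      (continuousOn_const.mul hψ''c.abs).div (hψ'c.pow 2)
        (fun x hx => pow_ne_zero 2 (hne x hx))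
    exact (this.mono huicc.le).intervalIntegrable
  have hIbnd : ∫ x in a..b, bnd x ≤ 2 * G / δ := by
    rw [hbnd_def]
    have : ∫ x in a..b, (g' x / δ + G * |ψ'' x| / (ψ' x) ^ 2)
        = (∫ x in a..b, g' x / δ) + ∫ x in a..b, G * |ψ'' x| / (ψ' x) ^ 2 :=
      integral_add hbnd_int1 hbnd_int2
    rw [this]
    have e1 : ∫ x in a..b, g' x / δ = (∫ x in a..b, g' x) / δ := integral_div δ _
    have e2 : ∫ x in a..b, G * |ψ'' x| / (ψ' x) ^ 2
        = G * ∫ x in a..b, |ψ'' x| / (ψ' x) ^ 2 := by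
      rw [← intervalIntegral.integral_const_mul]
      apply integral_congr
      intro x _; ring
    rw [e1, e2, hIg']
    have t1 : (g b - g a) / δ ≤ G / δ := by
      have h1 := hg0 a ⟨le_refl a, hab⟩
      have h2 := hgG b ⟨hab, le_refl b⟩
      gcongr
      linarith
    have t2 : G * ∫ x in a..b, |ψ'' x| / (ψ' x) ^ 2 ≤ G * δ⁻¹ :=
      mul_le_mul_of_nonneg_left hIabs hGnn
    have : G * δ⁻¹ = G / δ := by rw [div_eq_mul_inv]
    rw [this] at t2
    calc (g b - g a) / δ + G * ∫ x in a..b, |ψ'' x| / (ψ' x) ^ 2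
        ≤ G / δ + G / δ := add_le_add t1 t2
      _ = 2 * G / δ := by ring
  -- put it together
  have hInorm : ‖∫ x in a..b, h' x * u x‖ ≤ 2 * G / δ := by
    refine le_trans (intervalIntegral.norm_integral_le_integral_norm hab) ?_
    refine le_trans ?_ hIbnd
    apply integral_mono_on hab _ _ hptw
    · exact ((hh'uc.norm).mono huicc.le).intervalIntegrable
    · exact hbnd_int1.add hbnd_int2
  rw [hmain]
  have wa := hwnorm a ⟨le_refl a, hab⟩
  have wb := hwnorm b ⟨hab, le_refl b⟩
  calc ‖w b - w a - ∫ x in a..b, h' x * u x‖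
      ≤ ‖w b - w a‖ + ‖∫ x in a..b, h' x * u x‖ := norm_sub_le _ _
    _ ≤ (‖w b‖ + ‖w a‖) + ‖∫ x in a..b, h' x * u x‖ :=
        add_le_add_left (norm_sub_le _ _) _
    _ ≤ (G / δ + G / δ) + 2 * G / δ := add_le_add (add_le_add wb wa) hInorm
    _ = 4 * G / δ := by ring
lemma hd_sqrt (c x : ℝ) (hc : 0 < c) (hx : 0 < x) :
    HasDerivAt (fun y => Real.sqrt (c * y)) (c / (2 * Real.sqrt (c * x))) x := by
  have h := Real.hasDerivAt_sqrt (x := c * x) (by positivity)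
  have h2 : HasDerivAt (fun y : ℝ => c * y) c x := by
    simpa using (hasDerivAt_id x).const_mul c
  have := h.comp x h2
  refine this.congr_deriv ?_
  ring

lemma hd_inv_sqrt (c k x : ℝ) (hc : 0 < c) (hx : 0 < x) (hk : 0 < k) :
    HasDerivAt (fun y => c / (k * Real.sqrt (c * y)))
      (-(c / (2 * k * x * Real.sqrt (c * x)))) x := by
  have hs : (0:ℝ) < Real.sqrt (c * x) := Real.sqrt_pos.2 (by positivity)
  have h1 := hd_sqrt c x hc hx
  have h2 : HasDerivAt (fun y => k * Real.sqrt (c * y)) (k * (c / (2 * Real.sqrt (c * x)))) x :=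
    h1.const_mul k
  have h3 := (hasDerivAt_const x c).div h2 (by positivity)
  refine h3.congr_deriv ?_
  symm
  have h4 : Real.sqrt c * Real.sqrt c = c := Real.mul_self_sqrt hc.le
  have h5 : Real.sqrt x * Real.sqrt x = x := Real.mul_self_sqrt hx.le
  field_simp
  linear_combination (-c) * Real.sq_sqrt (by positivity : (0:ℝ) ≤ c * x)

lemma div_sqrt_mul (c x : ℝ) (hc : 0 < c) (hx : 0 < x) :
    c / Real.sqrt (c * x) = Real.sqrt c / Real.sqrt x := by
  have h2 : (0:ℝ) < Real.sqrt x := Real.sqrt_pos.2 hx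
  have h3 : (0:ℝ) < Real.sqrt (c*x) := Real.sqrt_pos.2 (by positivity)
  rw [Real.sqrt_mul hc.le, div_eq_div_iff (by positivity) h2.ne']
  linear_combination (-Real.sqrt x) * Real.mul_self_sqrt hc.le

lemma cmp_inv (c d x y : ℝ) (hc : 0 < c) (hd : 0 < d) (hx : 0 < x) (hy : 0 < y)
    (h : c * y ^ 3 ≤ d * x ^ 3) :
    c / (x * Real.sqrt (c * x)) ≤ d / (y * Real.sqrt (d * y)) := by
  have e : ∀ a z : ℝ, 0 < a → 0 < z → a / (z * Real.sqrt (a * z)) = Real.sqrt (a / z ^ 3) := by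
    intro a z ha hz
    have h1 : (0:ℝ) < Real.sqrt a := Real.sqrt_pos.2 ha
    have h2 : (0:ℝ) < Real.sqrt z := Real.sqrt_pos.2 hz
    rw [Real.sqrt_div ha.le, Real.sqrt_mul ha.le]
    have h3 : Real.sqrt (z ^ 3) = z * Real.sqrt z := by
      rw [pow_succ, Real.sqrt_mul (sq_nonneg z), Real.sqrt_sq hz.le]
    rw [h3, div_eq_div_iff (by positivity) (by positivity)]
    linear_combination (-(z * Real.sqrt z)) * Real.mul_self_sqrt ha.le
  rw [e c x hc hx, e d y hd hy]
  apply Real.sqrt_le_sqrt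
  rw [div_le_div_iff₀ (by positivity) (by positivity)]
  linarith

lemma cube_left (mR nR T x r : ℝ) (hm : 0 < mR) (hn : 0 < nR) (hT : 0 < T) (hx : 0 < x)
    (hr : r = (nR / mR) ^ ((3:ℝ)⁻¹)) (hr1 : 1 < r) (h : x * (r - 1) ≤ T) :
    nR * x ^ 3 ≤ mR * (x + T) ^ 3 := by
  have hr0 : 0 < r := by linarith
  have hrx : r * x ≤ x + T := by nlinarith
  have hcube : (r * x) ^ 3 ≤ (x + T) ^ 3 := by
    apply pow_le_pow_left₀ (by positivity) hrx
  have hr3 : r ^ 3 = nR / mR := by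
    rw [hr, ← Real.rpow_natCast ((nR / mR) ^ ((3:ℝ)⁻¹)) 3, ← Real.rpow_mul (by positivity)]
    norm_num
  have : (r * x) ^ 3 = (nR / mR) * x ^ 3 := by rw [mul_pow, hr3]
  rw [this] at hcube
  rw [div_mul_eq_mul_div, div_le_iff₀ hm] at hcube
  linarith

lemma cube_right (mR nR T x r : ℝ) (hm : 0 < mR) (hn : 0 < nR) (hT : 0 < T) (hx : 0 < x)
    (hr : r = (nR / mR) ^ ((3:ℝ)⁻¹)) (hr1 : 1 < r) (h : T ≤ x * (r - 1)) :
    mR * (x + T) ^ 3 ≤ nR * x ^ 3 := by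
  have hr0 : 0 < r := by linarith
  have hrx : x + T ≤ r * x := by nlinarith
  have hcube : (x + T) ^ 3 ≤ (r * x) ^ 3 := by
    apply pow_le_pow_left₀ (by positivity) hrx
  have hr3 : r ^ 3 = nR / mR := by
    rw [hr, ← Real.rpow_natCast ((nR / mR) ^ ((3:ℝ)⁻¹)) 3, ← Real.rpow_mul (by positivity)]
    norm_num
  have e : (r * x) ^ 3 = (nR / mR) * x ^ 3 := by rw [mul_pow, hr3]
  rw [e] at hcube
  rw [div_mul_eq_mul_div, le_div_iff₀ hm] at hcube
  linarith

lemma gap_lemma (M T x mR nR : ℝ) (hM : 1 ≤ M) (hT : 0 < T) (hTM : T ≤ M)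
    (hx1 : M ≤ x) (hx2 : x ≤ 2 * M) (hm : 1 ≤ mR) (hmn : mR + 1 ≤ nR)
    (hmT : mR * T ≤ M / 2) :
    (nR - mR) / (12 * Real.sqrt M * Real.sqrt nR)
      ≤ Real.sqrt nR / Real.sqrt (x + T) - Real.sqrt mR / Real.sqrt x := by
  have hmp : (0:ℝ) < mR := by linarith
  have hnp : (0:ℝ) < nR := by linarith
  have hxp : (0:ℝ) < x := by linarith
  have hxTp : (0:ℝ) < x + T := by linarith
  have hMp : (0:ℝ) < M := by linarith
  set A := Real.sqrt mR / Real.sqrt x with hA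
  set B := Real.sqrt nR / Real.sqrt (x + T) with hB
  have hApos : 0 < A := by positivity
  have hBpos : 0 < B := by positivity
  have hA2 : A ^ 2 = mR / x := by
    rw [hA, div_pow, Real.sq_sqrt hmp.le, Real.sq_sqrt hxp.le]
  have hB2 : B ^ 2 = nR / (x + T) := by
    rw [hB, div_pow, Real.sq_sqrt hnp.le, Real.sq_sqrt hxTp.le]
  -- lower bound on B^2 - A^2
  have hsq : (nR - mR) / (6 * M) ≤ B ^ 2 - A ^ 2 := by
    rw [hA2, hB2]
    rw [div_sub_div _ _ hxTp.ne' hxp.ne', div_le_div_iff₀ (by positivity) (by positivity)]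
    have hnm1 : 1 ≤ nR - mR := by linarith
    have hx3 : x + T ≤ 3 * M := by linarith
    have k1 : 6 * M * (mR * T) ≤ 3 * M * x := by nlinarith
    have k2 : (nR - mR) * ((x + T) * x) ≤ (nR - mR) * (3 * M * x) :=
      mul_le_mul_of_nonneg_left (mul_le_mul_of_nonneg_right hx3 hxp.le) (by linarith)
    have k3 : 3 * M * x * (nR - mR) ≤ 3 * M * x * (2 * (nR - mR) - 1) := by
      nlinarith [mul_nonneg (mul_nonneg (by linarith : (0:ℝ) ≤ 3 * M) hxp.le)
        (by linarith : (0:ℝ) ≤ nR - mR - 1)]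
    nlinarith [k1, k2, k3]
  -- upper bound on A + B
  have hsumB : B ≤ Real.sqrt nR / Real.sqrt M := by
    apply div_le_div₀ (Real.sqrt_nonneg _) (le_refl _) (Real.sqrt_pos.2 hMp)
    exact Real.sqrt_le_sqrt (by linarith)
  have hsumA : A ≤ Real.sqrt nR / Real.sqrt M := by
    apply div_le_div₀ (Real.sqrt_nonneg _) (Real.sqrt_le_sqrt (by linarith)) (Real.sqrt_pos.2 hMp)
    exact Real.sqrt_le_sqrt (by linarith)
  have hsum : A + B ≤ 2 * Real.sqrt nR / Real.sqrt M := by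
    have := add_le_add hsumA hsumB
    calc A + B ≤ Real.sqrt nR / Real.sqrt M + Real.sqrt nR / Real.sqrt M := this
      _ = 2 * Real.sqrt nR / Real.sqrt M := by ring
  have hsumpos : 0 < A + B := by linarith
  -- B - A = (B^2 - A^2)/(A + B)
  have hfact : B - A = (B ^ 2 - A ^ 2) / (A + B) := by
    field_simp
    ring
  rw [hfact]
  have step : (nR - mR) / (6 * M) / (2 * Real.sqrt nR / Real.sqrt M)
      ≤ (B ^ 2 - A ^ 2) / (A + B) := by
    have h0 : (0:ℝ) ≤ (nR - mR) / (6 * M) := div_nonneg (by linarith) (by linarith)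
    apply div_le_div₀ (by linarith) hsq hsumpos hsum
  refine le_trans ?_ step
  have hMM : Real.sqrt M * Real.sqrt M = M := Real.mul_self_sqrt hMp.le
  have heq : (nR - mR) / (6 * M) / (2 * Real.sqrt nR / Real.sqrt M)
      = (nR - mR) / (12 * Real.sqrt M * Real.sqrt nR) := by
    rw [show (6:ℝ) * M = 6 * (Real.sqrt M * Real.sqrt M) by rw [hMM]]
    have h1 : Real.sqrt M ≠ 0 := (Real.sqrt_pos.2 hMp).ne'
    have h2 : Real.sqrt nR ≠ 0 := (Real.sqrt_pos.2 hnp).ne'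
    field_simp
    linear_combination (0:ℝ) * hMM
  rw [heq]

lemma piece (M T a b mR nR kR s : ℝ)
    (hM : 1 ≤ M) (hT : 0 < T) (hTM : T ≤ M)
    (hab : a ≤ b) (ha : M ≤ a) (hb : b ≤ 2 * M)
    (hm : 1 ≤ mR) (hmn : mR + 1 ≤ nR) (hk : 1 ≤ kR)
    (hmT : mR * T ≤ M / 2)
    (hs : s = 1 ∨ s = -1)
    (hcube : (∀ x ∈ Icc a b, nR * x ^ 3 ≤ mR * (x + T) ^ 3) ∨
             (∀ x ∈ Icc a b, mR * (x + T) ^ 3 ≤ nR * x ^ 3)) :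
    ‖∫ x in a..b, (Real.sqrt x : ℂ) * Complex.exp
        (↑(2 * Real.pi * (s * (2 * Real.sqrt (mR * x) / kR - 2 * Real.sqrt (nR * (x + T)) / kR)))
          * Complex.I)‖ ≤ 50 * kR * Real.sqrt nR * M / (nR - mR) := by
  have hmp : (0:ℝ) < mR := by linarith
  have hnp : (0:ℝ) < nR := by linarith
  have hkp : (0:ℝ) < kR := by linarith
  have hMp : (0:ℝ) < M := by linarith
  have hπ := Real.pi_pos
  have hxpos : ∀ x ∈ Icc a b, (0:ℝ) < x := fun x hx => by
    have := hx.1; linarith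
  have hxTpos : ∀ x ∈ Icc a b, (0:ℝ) < x + T := fun x hx => by
    have := hx.1; linarith
  set ψ : ℝ → ℝ := fun x => 2 * Real.pi *
    (s * (2 * Real.sqrt (mR * x) / kR - 2 * Real.sqrt (nR * (x + T)) / kR)) with hψdef
  set ψ' : ℝ → ℝ := fun x => 2 * Real.pi * s *
    (mR / (kR * Real.sqrt (mR * x)) - nR / (kR * Real.sqrt (nR * (x + T)))) with hψ'def
  set ψ'' : ℝ → ℝ := fun x => 2 * Real.pi * s *
    (-(mR / (2 * kR * x * Real.sqrt (mR * x)))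
      + nR / (2 * kR * (x + T) * Real.sqrt (nR * (x + T)))) with hψ''def
  set G : ℝ := Real.sqrt 2 * Real.sqrt M with hGdef
  set δ : ℝ := Real.pi * (nR - mR) / (6 * kR * Real.sqrt M * Real.sqrt nR) with hδdef
  have hδpos : 0 < δ := by
    rw [hδdef]
    apply div_pos (mul_pos hπ (by linarith)) (by positivity)
  have hg : ∀ x ∈ Icc a b, HasDerivAt Real.sqrt (1 / (2 * Real.sqrt x)) x := fun x hx =>
    Real.hasDerivAt_sqrt (hxpos x hx).ne'
  have hψder : ∀ x ∈ Icc a b, HasDerivAt ψ (ψ' x) x := by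
    intro x hx
    have hxp := hxpos x hx
    have hxTp := hxTpos x hx
    have d1 := hd_sqrt mR x hmp hxp
    have d2 := (hd_sqrt nR (x + T) hnp hxTp).comp x ((hasDerivAt_id x).add_const T)
    have h := ((((d1.const_mul 2).div_const kR).sub
      ((d2.const_mul 2).div_const kR)).const_mul s).const_mul (2 * Real.pi)
    refine h.congr_deriv ?_
    have hs1 : Real.sqrt (mR * x) ≠ 0 := by positivity
    have hs2 : Real.sqrt (nR * (x + T)) ≠ 0 := by positivity
    rw [hψ'def]
    field_simp
  have hψdder : ∀ x ∈ Icc a b, HasDerivAt ψ' (ψ'' x) x := by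
    intro x hx
    have hxp := hxpos x hx
    have hxTp := hxTpos x hx
    have e1 := hd_inv_sqrt mR kR x hmp hxp hkp
    have e2 := (hd_inv_sqrt nR kR (x + T) hnp hxTp hkp).comp x ((hasDerivAt_id x).add_const T)
    have h := (e1.sub e2).const_mul (2 * Real.pi * s)
    refine h.congr_deriv ?_
    rw [hψ''def]
    ring
  have hg'c : ContinuousOn (fun x => 1 / (2 * Real.sqrt x)) (Icc a b) := by
    apply ContinuousOn.div continuousOn_const
      (continuousOn_const.mul Real.continuous_sqrt.continuousOn)
    intro x hx
    have := hxpos x hx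
    exact (mul_pos two_pos (Real.sqrt_pos.2 this)).ne'
  have hψ''c : ContinuousOn ψ'' (Icc a b) := by
    rw [hψ''def]
    apply ContinuousOn.mul continuousOn_const
    apply ContinuousOn.add
    · apply ContinuousOn.neg
      apply ContinuousOn.div continuousOn_const
      · fun_prop
      · intro x hx
        have h1 := hxpos x hx
        positivity
    · apply ContinuousOn.div continuousOn_const
      · fun_prop
      · intro x hx
        have h1 := hxpos x hx
        have h2 := hxTpos x hx
        positivity
  have hg0 : ∀ x ∈ Icc a b, 0 ≤ Real.sqrt x := fun x _ => Real.sqrt_nonneg x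
  have hgG : ∀ x ∈ Icc a b, Real.sqrt x ≤ G := by
    intro x hx
    rw [hGdef, ← Real.sqrt_mul (by norm_num) M]
    exact Real.sqrt_le_sqrt (by linarith [hx.2])
  have hg'0 : ∀ x ∈ Icc a b, 0 ≤ 1 / (2 * Real.sqrt x) := fun x _ => by positivity
  -- the sign of ψ'
  have hgapall : ∀ x ∈ Icc a b,
      (nR - mR) / (12 * Real.sqrt M * Real.sqrt nR)
        ≤ Real.sqrt nR / Real.sqrt (x + T) - Real.sqrt mR / Real.sqrt x := by
    intro x hx
    exact gap_lemma M T x mR nR hM hT hTM (le_trans ha hx.1) (le_trans hx.2 hb) hm hmn hmT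
  have hrw : ∀ x ∈ Icc a b,
      mR / (kR * Real.sqrt (mR * x)) = (Real.sqrt mR / Real.sqrt x) / kR ∧
      nR / (kR * Real.sqrt (nR * (x + T))) = (Real.sqrt nR / Real.sqrt (x + T)) / kR := by
    intro x hx
    constructor
    · rw [← div_sqrt_mul mR x hmp (hxpos x hx)]; ring
    · rw [← div_sqrt_mul nR (x + T) hnp (hxTpos x hx)]; ring
  have hsign : (∀ x ∈ Icc a b, ψ' x ≤ -δ) ∨ (∀ x ∈ Icc a b, δ ≤ ψ' x) := by
    rcases hs with rfl | rfl
    · left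
      intro x hx
      obtain ⟨e1, e2⟩ := hrw x hx
      have hgap := hgapall x hx
      show 2 * Real.pi * 1 * (mR / (kR * Real.sqrt (mR * x))
        - nR / (kR * Real.sqrt (nR * (x + T)))) ≤ -δ
      rw [e1, e2]
      have h2 : Real.sqrt mR / Real.sqrt x - Real.sqrt nR / Real.sqrt (x + T)
          ≤ -((nR - mR) / (12 * Real.sqrt M * Real.sqrt nR)) := by linarith
      calc 2 * Real.pi * 1 * (Real.sqrt mR / Real.sqrt x / kR
            - Real.sqrt nR / Real.sqrt (x + T) / kR)
          = (2 * Real.pi / kR) * (Real.sqrt mR / Real.sqrt x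
            - Real.sqrt nR / Real.sqrt (x + T)) := by ring
        _ ≤ (2 * Real.pi / kR) * (-((nR - mR) / (12 * Real.sqrt M * Real.sqrt nR))) :=
            mul_le_mul_of_nonneg_left h2 (by positivity)
        _ = -δ := by rw [hδdef]; ring
    · right
      intro x hx
      obtain ⟨e1, e2⟩ := hrw x hx
      have hgap := hgapall x hx
      show δ ≤ 2 * Real.pi * (-1) * (mR / (kR * Real.sqrt (mR * x))
        - nR / (kR * Real.sqrt (nR * (x + T))))
      rw [e1, e2]
      calc δ = (2 * Real.pi / kR) * ((nR - mR) / (12 * Real.sqrt M * Real.sqrt nR)) := by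
            rw [hδdef]; ring
        _ ≤ (2 * Real.pi / kR) * (Real.sqrt nR / Real.sqrt (x + T)
            - Real.sqrt mR / Real.sqrt x) := mul_le_mul_of_nonneg_left hgap (by positivity)
        _ = 2 * Real.pi * (-1) * (Real.sqrt mR / Real.sqrt x / kR
            - Real.sqrt nR / Real.sqrt (x + T) / kR) := by ring
  -- sign of ψ''
  have hVU : ∀ x ∈ Icc a b, nR * x ^ 3 ≤ mR * (x + T) ^ 3 →
      -(mR / (2 * kR * x * Real.sqrt (mR * x)))
        + nR / (2 * kR * (x + T) * Real.sqrt (nR * (x + T))) ≤ 0 := by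
    intro x hx hc
    have key := cmp_inv nR mR (x + T) x hnp hmp (hxTpos x hx) (hxpos x hx) hc
    have e : -(mR / (2 * kR * x * Real.sqrt (mR * x)))
        + nR / (2 * kR * (x + T) * Real.sqrt (nR * (x + T)))
        = (nR / ((x + T) * Real.sqrt (nR * (x + T))) - mR / (x * Real.sqrt (mR * x))) / (2 * kR) := by
      generalize Real.sqrt (mR * x) = S1
      generalize Real.sqrt (nR * (x + T)) = S2
      generalize x + T = y
      ring
    rw [e]
    apply div_nonpos_of_nonpos_of_nonneg (by linarith) (by positivity)
  have hUV : ∀ x ∈ Icc a b, mR * (x + T) ^ 3 ≤ nR * x ^ 3 →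
      0 ≤ -(mR / (2 * kR * x * Real.sqrt (mR * x)))
        + nR / (2 * kR * (x + T) * Real.sqrt (nR * (x + T))) := by
    intro x hx hc
    have key := cmp_inv mR nR x (x + T) hmp hnp (hxpos x hx) (hxTpos x hx) hc
    have e : -(mR / (2 * kR * x * Real.sqrt (mR * x)))
        + nR / (2 * kR * (x + T) * Real.sqrt (nR * (x + T)))
        = (nR / ((x + T) * Real.sqrt (nR * (x + T))) - mR / (x * Real.sqrt (mR * x))) / (2 * kR) := by
      generalize Real.sqrt (mR * x) = S1
      generalize Real.sqrt (nR * (x + T)) = S2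
      generalize x + T = y
      ring
    rw [e]
    exact div_nonneg (by linarith) (by positivity)
  have hψ''sign : (∀ x ∈ Icc a b, 0 ≤ ψ'' x) ∨ (∀ x ∈ Icc a b, ψ'' x ≤ 0) := by
    rcases hs with rfl | rfl <;> rcases hcube with hc | hc
    · right; intro x hx
      have := hVU x hx (hc x hx)
      show 2 * Real.pi * 1 * _ ≤ 0
      nlinarith [this, hπ]
    · left; intro x hx
      have := hUV x hx (hc x hx)
      show 0 ≤ 2 * Real.pi * 1 * _
      nlinarith [this, hπ]
    · left; intro x hx
      have := hVU x hx (hc x hx)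
      show 0 ≤ 2 * Real.pi * (-1) * _
      nlinarith [this, hπ]
    · right; intro x hx
      have := hUV x hx (hc x hx)
      show 2 * Real.pi * (-1) * _ ≤ 0
      nlinarith [this, hπ]
  have main := vdc_core a b hab Real.sqrt (fun x => 1 / (2 * Real.sqrt x)) ψ ψ' ψ'' G δ
    hδpos hg hψder hψdder hg'c hψ''c hg0 hgG hg'0 hsign hψ''sign
  refine le_trans main ?_
  -- final computation: 4 * G / δ ≤ 50 * kR * √nR * M / (nR - mR)
  have hMM : Real.sqrt M * Real.sqrt M = M := Real.mul_self_sqrt hMp.le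
  have hs2 : Real.sqrt 2 ≤ 1.5 := by
    nlinarith [Real.sq_sqrt (by norm_num : (0:ℝ) ≤ 2), Real.sqrt_nonneg 2]
  have hπ3 : (3:ℝ) < Real.pi := Real.pi_gt_three
  have heq : 4 * G / δ = (24 * Real.sqrt 2 / Real.pi) * (kR * Real.sqrt nR * M / (nR - mR)) := by
    rw [hGdef, hδdef]
    have h1 : Real.sqrt M ≠ 0 := by positivity
    have h2 : Real.sqrt nR ≠ 0 := by positivity
    have h3 : nR - mR ≠ 0 := by intro h; nlinarith
    field_simp
    linear_combination 24 * hMM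
  rw [heq]
  have hQ : 0 ≤ kR * Real.sqrt nR * M / (nR - mR) :=
    div_nonneg (by positivity) (by linarith)
  have hC : 24 * Real.sqrt 2 / Real.pi ≤ 50 := by
    rw [div_le_iff₀ hπ]
    nlinarith
  calc (24 * Real.sqrt 2 / Real.pi) * (kR * Real.sqrt nR * M / (nR - mR))
      ≤ 50 * (kR * Real.sqrt nR * M / (nR - mR)) := mul_le_mul_of_nonneg_right hC hQ
    _ = 50 * kR * Real.sqrt nR * M / (nR - mR) := by ring

/-- `e(t) = exp(2πit)`. -/
noncomputable def e (t : ℝ) : ℂ := Complex.exp (2 * Real.pi * Complex.I * t)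

theorem mean_square_lemma_three :
    ∃ C : ℝ, 0 < C ∧ ∀ M T Ξ : ℝ, 1 ≤ M → 0 < T → T ≤ Real.sqrt M →
      0 ≤ Ξ → Ξ ≤ M → ∀ m n k : ℕ, 0 < m → 0 < n → 0 < k → m < n → (m : ℝ) ≤ M / (2 * T) →
      ∀ s : ℝ, s = 1 ∨ s = -1 →
        ‖∫ x in M..(M + Ξ), ((x ^ ((1:ℝ)/2) : ℝ) : ℂ) *
            e (s * (2 * Real.sqrt (m * x) / k - 2 * Real.sqrt (n * (x + T)) / k))‖ ≤
          C * k * Real.sqrt n * M / ((n : ℝ) - (m : ℝ)) := by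
  refine ⟨100, by norm_num, ?_⟩
  intro M T Ξ hM hT hTs hΞ0 hΞM m n k hm hn hk hmn hmle s hs
  set mR : ℝ := (m : ℝ) with hmR
  set nR : ℝ := (n : ℝ) with hnR
  set kR : ℝ := (k : ℝ) with hkR
  have hmp : 1 ≤ mR := by
    rw [hmR]
    have : 1 ≤ m := hm
    exact_mod_cast this
  have hnmn : mR + 1 ≤ nR := by
    rw [hmR, hnR]
    exact_mod_cast hmn
  have hkp : 1 ≤ kR := by
    rw [hkR]
    have : 1 ≤ k := hk
    exact_mod_cast this
  have hMp : (0:ℝ) < M := by linarith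
  have hsM : Real.sqrt M ≤ M := by
    nlinarith [Real.sq_sqrt hMp.le, Real.sqrt_nonneg M]
  have hTM : T ≤ M := le_trans hTs hsM
  have hmT : mR * T ≤ M / 2 := by
    have h1 := mul_le_mul_of_nonneg_right hmle hT.le
    have h2 : M / (2 * T) * T = M / 2 := by field_simp
    rw [h2] at h1
    exact h1
  -- rewrite the integrand
  set f : ℝ → ℂ := fun x => (Real.sqrt x : ℂ) * Complex.exp
      (↑(2 * Real.pi * (s * (2 * Real.sqrt (mR * x) / kR - 2 * Real.sqrt (nR * (x + T)) / kR)))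
        * Complex.I) with hfdef
  have hcong : (∫ x in M..(M + Ξ), ((x ^ ((1:ℝ)/2) : ℝ) : ℂ) *
      e (s * (2 * Real.sqrt (m * x) / k - 2 * Real.sqrt (n * (x + T)) / k))) =
      ∫ x in M..(M + Ξ), f x := by
    apply intervalIntegral.integral_congr
    intro x _
    rw [hfdef]
    simp only
    rw [← Real.sqrt_eq_rpow]
    congr 1
    rw [e]
    congr 1
    rw [hmR, hnR, hkR]
    push_cast
    ring
  rw [hcong]
  -- continuity and integrability of f
  have hfc : Continuous f := by
    rw [hfdef]
    apply Continuous.mul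
    · exact Complex.continuous_ofReal.comp Real.continuous_sqrt
    · apply Complex.continuous_exp.comp
      apply Continuous.mul _ continuous_const
      apply Complex.continuous_ofReal.comp
      fun_prop
  -- splitting point
  set r : ℝ := (nR / mR) ^ ((3:ℝ)⁻¹) with hrdef
  have hr1 : 1 < r := by
    rw [hrdef, Real.one_lt_rpow_iff_of_pos (div_pos (by linarith) (by linarith))]
    left
    constructor
    · rw [lt_div_iff₀ (by linarith)]; linarith
    · norm_num
  set c0 : ℝ := T / (r - 1) with hc0def
  set c : ℝ := min (max M c0) (M + Ξ) with hcdef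
  have hMc : M ≤ c := le_min (le_max_left _ _) (by linarith)
  have hcMΞ : c ≤ M + Ξ := min_le_right _ _
  have hc2M : c ≤ 2 * M := by
    refine le_trans hcMΞ (by linarith)
  have hc0pos : 0 < c0 := by
    rw [hc0def]; exact div_pos hT (by linarith)
  -- cube conditions on the two pieces
  have hcube1 : (∀ x ∈ Icc M c, nR * x ^ 3 ≤ mR * (x + T) ^ 3) ∨
      (∀ x ∈ Icc M c, mR * (x + T) ^ 3 ≤ nR * x ^ 3) := by
    rcases le_total M c0 with h | h
    · left
      intro x hx
      have hxc0 : x ≤ c0 := le_trans hx.2 (le_trans (min_le_left _ _) (by rw [max_eq_right h]))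
      have hxpos : 0 < x := by have := hx.1; linarith
      apply cube_left mR nR T x r (by linarith) (by linarith) hT hxpos hrdef hr1
      rw [hc0def] at hxc0
      exact (le_div_iff₀ (by linarith)).1 hxc0
    · right
      intro x hx
      have hxc0 : c0 ≤ x := le_trans h hx.1
      have hxpos : 0 < x := by have := hx.1; linarith
      apply cube_right mR nR T x r (by linarith) (by linarith) hT hxpos hrdef hr1
      rw [hc0def] at hxc0
      exact (div_le_iff₀ (by linarith)).1 hxc0
  have hcube2 : (∀ x ∈ Icc c (M + Ξ), nR * x ^ 3 ≤ mR * (x + T) ^ 3) ∨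
      (∀ x ∈ Icc c (M + Ξ), mR * (x + T) ^ 3 ≤ nR * x ^ 3) := by
    rcases le_total c0 M with h | h
    · right
      intro x hx
      have hxc0 : c0 ≤ x := le_trans h (le_trans hMc hx.1)
      have hxpos : 0 < x := by have := le_trans hMc hx.1; linarith
      apply cube_right mR nR T x r (by linarith) (by linarith) hT hxpos hrdef hr1
      rw [hc0def] at hxc0
      exact (div_le_iff₀ (by linarith)).1 hxc0
    · rcases le_total c0 (M + Ξ) with h2 | h2
      · right
        intro x hx
        have hcc0 : c = c0 := by
          rw [hcdef, max_eq_right h, min_eq_left h2]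
        have hxc0 : c0 ≤ x := hcc0 ▸ hx.1
        have hxpos : 0 < x := by have := le_trans hMc hx.1; linarith
        apply cube_right mR nR T x r (by linarith) (by linarith) hT hxpos hrdef hr1
        rw [hc0def] at hxc0
        exact (div_le_iff₀ (by linarith)).1 hxc0
      · left
        intro x hx
        have hxc0 : x ≤ c0 := le_trans hx.2 h2
        have hxpos : 0 < x := by have := le_trans hMc hx.1; linarith
        apply cube_left mR nR T x r (by linarith) (by linarith) hT hxpos hrdef hr1
        rw [hc0def] at hxc0
        exact (le_div_iff₀ (by linarith)).1 hxc0
  -- split the integral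
  have hsplit : (∫ x in M..c, f x) + (∫ x in c..(M + Ξ), f x) = ∫ x in M..(M + Ξ), f x :=
    intervalIntegral.integral_add_adjacent_intervals
      (hfc.intervalIntegrable _ _) (hfc.intervalIntegrable _ _)
  rw [← hsplit]
  have hp1 := piece M T M c mR nR kR s hM hT hTM hMc (le_refl M) hc2M hmp hnmn hkp hmT hs hcube1
  have hp2 := piece M T c (M + Ξ) mR nR kR s hM hT hTM hcMΞ hMc (by linarith) hmp hnmn hkp
    hmT hs hcube2
  calc ‖(∫ x in M..c, f x) + (∫ x in c..(M + Ξ), f x)‖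
      ≤ ‖(∫ x in M..c, f x)‖ + ‖(∫ x in c..(M + Ξ), f x)‖ := norm_add_le _ _
    _ ≤ 50 * kR * Real.sqrt nR * M / (nR - mR) + 50 * kR * Real.sqrt nR * M / (nR - mR) :=
        add_le_add hp1 hp2
    _ = 100 * kR * Real.sqrt nR * M / (nR - mR) := by ring
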